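/- Under conjunctivity, c^ω ; d = c^* ; d ⊓ c^∞ for all commands c, d. -/
import Mathlib


/-- A Concurrent Refinement Algebra over a complete distributive lattice of
commands, ordered by refinement (`⊓` = nondeterministic choice, `⊥` = abort,
`⊤` = magic), with sequential composition `seq` (identity `nil`),
synchronous parallel `par`, weak conjunction `conj`, a Boolean-style
sub-lattice of atomic steps `Atomic` (with `eps` the environment-step identity
of `par`) and a sub-lattice of tests `Test`. -/
structure CRA (C : Type*) [CompleteDistribLattice C] where
  seq : C → C → C
  par : C → C → C
  conj : C → C → C
  nil : C
  eps : C
  Atomic : C → Prop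
  Test : C → Prop
  seq_assoc : ∀ a b c, seq (seq a b) c = seq a (seq b c)
  seq_nil : ∀ c, seq c nil = c
  nil_seq : ∀ c, seq nil c = c
  seq_mono_left : ∀ d : C, Monotone fun c => seq c d
  seq_mono_right : ∀ c : C, Monotone (seq c)
  top_seq : ∀ c, seq ⊤ c = ⊤
  bot_seq : ∀ c, seq ⊥ c = ⊥
  /-- sequential composition distributes over arbitrary choices on the right -/
  seq_sInf_distrib : ∀ (S : Set C) (d : C), seq (sInf S) d = ⨅ c ∈ S, seq c d
  par_assoc : ∀ a b c, par (par a b) c = par a (par b c)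
  par_comm : ∀ a b, par a b = par b a
  /-- parallel distributes over arbitrary choices -/
  par_sInf_distrib : ∀ (c : C) (S : Set C), par c (sInf S) = ⨅ d ∈ S, par c d
  nil_par_nil : par nil nil = nil
  atomic_par : ∀ a b, Atomic a → Atomic b → Atomic (par a b)
  /-- synchronous interchange law for atomic steps -/
  interchange : ∀ a b c d, Atomic a → Atomic b →
    par (seq a c) (seq b d) = seq (par a b) (par c d)
  par_atomic_seq_nil : ∀ a c, Atomic a → par (seq a c) nil = ⊤
  atomic_eps : Atomic eps
  /-- `eps` is the identity of parallel on atomic steps -/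
  eps_par_atomic : ∀ a, Atomic a → par eps a = a
  conj_assoc : ∀ a b c, conj (conj a b) c = conj a (conj b c)
  conj_comm : ∀ a b, conj a b = conj b a
  conj_idem : ∀ a, conj a a = a
  conj_bot : ∀ c, conj c ⊥ = ⊥
  conj_atomic : ∀ a b, Atomic a → Atomic b → conj a b = a ⊔ b
  conj_test : ∀ t t', Test t → Test t' → conj t t' = t ⊔ t'
  conj_interchange : ∀ a b c d, Atomic a → Atomic b →
    conj (seq a c) (seq b d) = seq (conj a b) (conj c d)
  conj_atomic_seq_nil : ∀ a c, Atomic a → conj (seq a c) nil = ⊤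
  conj_sInf_distrib : ∀ (c : C) (S : Set C), S.Nonempty →
    conj c (sInf S) = ⨅ d ∈ S, conj c d
  atomic_conj : ∀ a b, Atomic a → Atomic b → Atomic (conj a b)
  test_nil : Test nil
  test_nil_le : ∀ t, Test t → nil ≤ t
  test_seq_par_interchange : ∀ t t' c d, Test t → Test t' →
    par (seq t c) (seq t' d) = seq (t ⊔ t') (par c d)
  conj_test_interchange : ∀ t t' c d, Test t → Test t' →
    conj (seq t c) (seq t' d) = seq (t ⊔ t') (conj c d)

namespace CRA

variable {C : Type*} [CompleteDistribLattice C] (A : CRA C)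

/-- possibly infinite iteration `c^ω = μ x. nil ⊓ c;x` -/
def omega (c : C) : C :=
  OrderHom.lfp ⟨fun x => A.nil ⊓ A.seq c x,
    fun _ _ h => inf_le_inf_left _ (A.seq_mono_right c h)⟩

/-- finite iteration `c^* = ν x. nil ⊓ c;x` -/
def star (c : C) : C :=
  OrderHom.gfp ⟨fun x => A.nil ⊓ A.seq c x,
    fun _ _ h => inf_le_inf_left _ (A.seq_mono_right c h)⟩

/-- infinite iteration `c^∞ = c^ω ; ⊤` -/
def inft (c : C) : C := A.seq (A.omega c) ⊤

/-- finite powers: `c^0 = nil`, `c^(i+1) = c ; c^i` -/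
def pow (c : C) : ℕ → C
  | 0 => A.nil
  | n + 1 => A.seq c (pow c n)

end CRA

theorem omega_seq {C : Type*} [CompleteDistribLattice C] (A : CRA C)
    (hconj : ∀ (c : C) (S : Set C), S.Nonempty → A.seq c (sInf S) = ⨅ d ∈ S, A.seq c d) (c d : C) :
    A.seq (A.omega c) d = A.seq (A.star c) d ⊓ A.inft c := by
  classical
  -- the generating order-homs
  set f : C →o C := ⟨fun x => A.nil ⊓ A.seq c x,
    fun _ _ h => inf_le_inf_left _ (A.seq_mono_right c h)⟩ with hf
  set h : C →o C := ⟨fun x => A.seq c x, A.seq_mono_right c⟩ with hh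
  have homega : A.omega c = OrderHom.lfp f := rfl
  have hstar : A.star c = OrderHom.gfp f := rfl
  set L : C := OrderHom.lfp h with hL
  -- binary distribution laws
  have bin_right : ∀ x y e : C, A.seq (x ⊓ y) e = A.seq x e ⊓ A.seq y e := by
    intro x y e
    have := A.seq_sInf_distrib {x, y} e
    rw [sInf_pair, iInf_pair] at this
    exact this
  have bin_left : ∀ x y : C, A.seq c (x ⊓ y) = A.seq c x ⊓ A.seq c y := by
    intro x y
    have := hconj c {x, y} ⟨x, by simp⟩
    rw [sInf_pair, iInf_pair] at this
    exact this
  -- fixpoint equations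
  have omega_fix : A.nil ⊓ A.seq c (A.omega c) = A.omega c := by
    rw [homega]; exact OrderHom.map_lfp f
  have star_fix : A.nil ⊓ A.seq c (A.star c) = A.star c := by
    rw [hstar]; exact OrderHom.map_gfp f
  have L_fix : A.seq c L = L := OrderHom.map_lfp h
  -- omega is below star and L
  have omega_le_star : A.omega c ≤ A.star c := by
    rw [homega, hstar]
    exact OrderHom.lfp_le f (le_of_eq (OrderHom.map_gfp f))
  have omega_le_L : A.omega c ≤ L := by
    rw [homega]
    exact OrderHom.lfp_le f (le_trans inf_le_right (le_of_eq L_fix))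
  -- L absorbs sequential composition on the right
  have L_le_Le : ∀ e : C, L ≤ A.seq L e := by
    intro e
    refine OrderHom.lfp_le h (le_of_eq ?_)
    show A.seq c (A.seq L e) = A.seq L e
    rw [← A.seq_assoc, L_fix]
  have L_seq : ∀ e : C, A.seq L e = L := by
    have L_top : A.seq L ⊤ ≤ L := by
      calc A.seq L ⊤ ≤ A.seq (A.seq L ⊥) ⊤ := A.seq_mono_left ⊤ (L_le_Le ⊥)
        _ = A.seq L (A.seq ⊥ ⊤) := A.seq_assoc _ _ _
        _ = A.seq L ⊥ := by rw [A.bot_seq]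
        _ ≤ A.seq L A.nil := A.seq_mono_right L bot_le
        _ = L := A.seq_nil L
    intro e
    exact le_antisymm (le_trans (A.seq_mono_right L le_top) L_top) (L_le_Le e)
  -- the hard direction of isolation, via a Heyting-style argument
  have star_L_le_omega : A.star c ⊓ L ≤ A.omega c := by
    set S : Set C := {w | A.star c ⊓ w ≤ A.omega c} with hS
    set r : C := sSup S with hr
    have h1 : A.star c ⊓ r ≤ A.omega c := by
      rw [hr, inf_sSup_eq]
      exact iSup₂_le fun w hw => hw
    have h2 : A.seq c r ≤ r := by
      refine le_sSup ?_
      show A.star c ⊓ A.seq c r ≤ A.omega c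
      calc A.star c ⊓ A.seq c r
          = (A.nil ⊓ A.seq c (A.star c)) ⊓ A.seq c r := by rw [star_fix]
        _ = A.nil ⊓ (A.seq c (A.star c) ⊓ A.seq c r) := inf_assoc _ _ _
        _ = A.nil ⊓ A.seq c (A.star c ⊓ r) := by rw [bin_left]
        _ ≤ A.nil ⊓ A.seq c (A.omega c) := inf_le_inf_left _ (A.seq_mono_right c h1)
        _ = A.omega c := omega_fix
    have h3 : L ≤ r := OrderHom.lfp_le h h2
    exact le_trans (inf_le_inf_left _ h3) h1
  -- isolation
  have isolation : A.omega c = A.star c ⊓ L :=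
    le_antisymm (le_inf omega_le_star omega_le_L) star_L_le_omega
  -- assemble
  have lhs : A.seq (A.omega c) d = A.seq (A.star c) d ⊓ L := by
    rw [isolation, bin_right, L_seq]
  have hinft : A.inft c = A.seq (A.star c) ⊤ ⊓ L := by
    show A.seq (A.omega c) ⊤ = A.seq (A.star c) ⊤ ⊓ L
    rw [isolation, bin_right, L_seq]
  rw [lhs, hinft]
  have hd_top : A.seq (A.star c) d ≤ A.seq (A.star c) ⊤ := A.seq_mono_right _ le_top
  rw [← inf_assoc, inf_eq_left.2 hd_top]
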